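/- Let G be a finite simple graph with an orientation of its edges and triangles. Let μ₁ ≥ ... ≥ μ_n be the eigenvalues of the Laplacian matrix L(G) and let η₁ ≥ ... ≥ η_t be the eigenvalues of the adjacency matrix A(G_△) of the triangular signed graph. Then the multiset of non-zero eigenvalues of the Helmholtzian matrix H(G) equals the multiset consisting of all non-zero μ_i together with all values 3 + η_j that are non-zero. In particular, every non-zero Laplacian eigenvalue of G is an H-eigenvalue of G, and the largest H-eigenvalue is max{μ₁, 3 + η₁}. -/

import Mathlib

set_option linter.unusedSectionVars false
set_option maxHeartbeats 1000000


open scoped Classical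
open scoped Matrix

namespace HelmPaper

variable {V : Type} [Fintype V] [DecidableEq V]

/-- The set of triangles of `G`, i.e. the 3-element cliques of `G`. -/
abbrev Triangle (G : SimpleGraph V) : Type :=
  {s : Finset V // s.card = 3 ∧ G.IsClique (s : Set V)}

/-- An orientation of the edges of `G`: each edge `e` gets a head `e⁺` and a tail `e⁻`. -/
structure Orientation (G : SimpleGraph V) where
  head : G.edgeSet → V
  tail : G.edgeSet → V
  consistent : ∀ e : G.edgeSet, (e : Sym2 V) = s(head e, tail e)

/-- A cyclic orientation of each triangle of `G`, recorded by a representative ordered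
triple of its three vertices. -/
structure TriOrientation (G : SimpleGraph V) where
  fst : Triangle G → V
  snd : Triangle G → V
  trd : Triangle G → V
  consistent : ∀ t : Triangle G, ({fst t, snd t, trd t} : Finset V) = t.val

/-- The edge-vertex incidence matrix `B`. -/
noncomputable def bMat (G : SimpleGraph V) (o : Orientation G) : Matrix G.edgeSet V ℝ :=
  fun e v => if v = o.head e then 1 else if v = o.tail e then -1 else 0

lemma bMat_def (G : SimpleGraph V) (o : Orientation G) (e : G.edgeSet) (v : V) :
    bMat G o e v = if v = o.head e then 1 else if v = o.tail e then -1 else 0 := rfl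

/-- The oriented edge `e` agrees with the cyclic orientation of the triangle `t`. -/
def Agrees {G : SimpleGraph V} (o : Orientation G) (τ : TriOrientation G)
    (e : G.edgeSet) (t : Triangle G) : Prop :=
  (o.tail e = τ.fst t ∧ o.head e = τ.snd t) ∨
  (o.tail e = τ.snd t ∧ o.head e = τ.trd t) ∨
  (o.tail e = τ.trd t ∧ o.head e = τ.fst t)

/-- The oriented edge `e` disagrees with the cyclic orientation of the triangle `t`. -/
def Disagrees {G : SimpleGraph V} (o : Orientation G) (τ : TriOrientation G)
    (e : G.edgeSet) (t : Triangle G) : Prop :=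
  (o.head e = τ.fst t ∧ o.tail e = τ.snd t) ∨
  (o.head e = τ.snd t ∧ o.tail e = τ.trd t) ∨
  (o.head e = τ.trd t ∧ o.tail e = τ.fst t)

/-- The triangle-edge incidence matrix `C`. -/
noncomputable def cMat (G : SimpleGraph V) (o : Orientation G) (τ : TriOrientation G) :
    Matrix (Triangle G) G.edgeSet ℝ :=
  fun t e => if Agrees o τ e t then 1 else if Disagrees o τ e t then -1 else 0

/-- The Helmholtzian matrix `H(G) = B Bᵀ + Cᵀ C`. -/
noncomputable def helm (G : SimpleGraph V) (o : Orientation G) (τ : TriOrientation G) :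
    Matrix G.edgeSet G.edgeSet ℝ :=
  bMat G o * (bMat G o)ᵀ + (cMat G o τ)ᵀ * cMat G o τ

/-- The edge `e` (as an unordered pair of vertices) lies in the triangle `t`. -/
def EdgeInTri (G : SimpleGraph V) (e : Sym2 V) (t : Triangle G) : Prop :=
  ∀ v ∈ e, v ∈ t.val

/-- The triangle degree `△(e)`: the number of triangles of `G` containing the edge `e`. -/
noncomputable def triDeg (G : SimpleGraph V) (e : Sym2 V) : ℕ :=
  (Finset.univ.filter fun t : Triangle G => EdgeInTri G e t).card

/-- The adjacency matrix of the triangular signed graph `G_△`: for distinct triangles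
sharing a common edge `e`, the entry is `1` if the orientation of `e` agrees with both
triangles or disagrees with both, and `-1` otherwise; all other entries are `0`. -/
noncomputable def triAdj (G : SimpleGraph V) (o : Orientation G) (τ : TriOrientation G) :
    Matrix (Triangle G) (Triangle G) ℝ :=
  fun t₁ t₂ =>
    if t₁ ≠ t₂ ∧ ∃ e : G.edgeSet, EdgeInTri G (e : Sym2 V) t₁ ∧ EdgeInTri G (e : Sym2 V) t₂ ∧
        ((Agrees o τ e t₁ ∧ Agrees o τ e t₂) ∨ (Disagrees o τ e t₁ ∧ Disagrees o τ e t₂))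
    then 1
    else if t₁ ≠ t₂ ∧ ∃ e : G.edgeSet, EdgeInTri G (e : Sym2 V) t₁ ∧ EdgeInTri G (e : Sym2 V) t₂
    then -1
    else 0


section GeneralAlgebra

open Polynomial

lemma sup_eq_max_aux (SH SL ST : Set ℝ) (hfH : SH.Finite) (hfL : SL.Finite) (hfT : ST.Finite)
    (h1 : ∀ x ∈ SH, x ≠ 0 → x ∈ SL ∪ ST)
    (h2 : ∀ x ∈ SL, x ≠ 0 → x ∈ SH)
    (h3 : ∀ x ∈ ST, x ≠ 0 → x ∈ SH)
    (hmu : ∃ x ∈ SL, 0 < x) :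
    sSup SH = max (sSup SL) (sSup ST) := by
  obtain ⟨μ, hμL, hμpos⟩ := hmu
  have hμH : μ ∈ SH := h2 μ hμL hμpos.ne'
  have hHne : SH.Nonempty := ⟨μ, hμH⟩
  have hLne : SL.Nonempty := ⟨μ, hμL⟩
  have hbH := hfH.bddAbove
  have hbL := hfL.bddAbove
  have hbT := hfT.bddAbove
  have hμle : μ ≤ sSup SH := le_csSup hbH hμH
  have hμleL : μ ≤ sSup SL := le_csSup hbL hμL
  apply le_antisymm
  · apply csSup_le hHne
    intro x hx
    by_cases hx0 : x = 0
    · subst hx0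
      exact le_trans hμpos.le (le_trans hμleL (le_max_left _ _))
    · rcases h1 x hx hx0 with h | h
      · exact le_trans (le_csSup hbL h) (le_max_left _ _)
      · exact le_trans (le_csSup hbT h) (le_max_right _ _)
  · apply max_le
    · apply csSup_le hLne
      intro x hx
      by_cases hx0 : x = 0
      · subst hx0; exact le_trans hμpos.le hμle
      · exact le_csSup hbH (h2 x hx hx0)
    · rcases Set.eq_empty_or_nonempty ST with hT | hTne
      · rw [hT, Real.sSup_empty]
        exact le_trans hμpos.le hμle
      · apply csSup_le hTne
        intro x hx
        by_cases hx0 : x = 0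
        · subst hx0; exact le_trans hμpos.le hμle
        · exact le_csSup hbH (h3 x hx hx0)

lemma filter_roots_eq_of_pow_mul_eq {p q : ℝ[X]} (hp : p ≠ 0) (hq : q ≠ 0) {a b : ℕ}
    (h : X ^ a * p = X ^ b * q) :
    (p.roots.filter fun x => x ≠ 0) = q.roots.filter fun x => x ≠ 0 := by
  have hX : (X : ℝ[X]) ≠ 0 := X_ne_zero
  have h' := congrArg Polynomial.roots h
  rw [Polynomial.roots_mul (mul_ne_zero (pow_ne_zero _ hX) hp),
    Polynomial.roots_mul (mul_ne_zero (pow_ne_zero _ hX) hq),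
    Polynomial.roots_pow, Polynomial.roots_pow, Polynomial.roots_X] at h'
  have h'' := congrArg (Multiset.filter fun x => x ≠ 0) h'
  rw [Multiset.filter_add, Multiset.filter_add] at h''
  have hz : ∀ c : ℕ, (Multiset.filter (fun x => x ≠ 0) (c • ({0} : Multiset ℝ))) = 0 := by
    intro c
    rw [Multiset.filter_eq_nil]
    intro x hx
    rw [Multiset.nsmul_singleton] at hx
    simp [Multiset.eq_of_mem_replicate hx]
  rwa [hz, hz, zero_add, zero_add] at h''

variable {k m n : Type} [Fintype k] [DecidableEq k] [Fintype m] [DecidableEq m]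
  [Fintype n] [DecidableEq n]

lemma charpoly_mul_eq_of_mul_eq_zero {M N : Matrix k k ℝ} (h : M * N = 0) :
    M.charpoly * N.charpoly = X ^ (Fintype.card k) * (M + N).charpoly := by
  have hmap : ((C : ℝ →+* ℝ[X]).mapMatrix (M + N)) =
      (C : ℝ →+* ℝ[X]).mapMatrix M + (C : ℝ →+* ℝ[X]).mapMatrix N := by
    simp [map_add]
  have hMN : ((C : ℝ →+* ℝ[X]).mapMatrix M) * ((C : ℝ →+* ℝ[X]).mapMatrix N) = 0 := by
    rw [← _root_.map_mul, h, map_zero]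
  have hscalar : (Matrix.scalar k (X : ℝ[X])) = (X : ℝ[X]) • (1 : Matrix k k ℝ[X]) := by
    rw [Matrix.scalar_apply]
    ext i j
    by_cases hij : i = j <;> simp [hij, Matrix.diagonal, Matrix.one_apply]
  have key : Matrix.charmatrix M * Matrix.charmatrix N =
      (Matrix.scalar k (X : ℝ[X])) * Matrix.charmatrix (M + N) := by
    simp only [Matrix.charmatrix, hmap, hscalar]
    rw [sub_mul, mul_sub, mul_sub, mul_sub, hMN]
    simp only [Matrix.smul_mul, Matrix.mul_smul, one_mul, mul_one, sub_zero]
    rw [smul_add]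
    abel
  have := congrArg Matrix.det key
  rwa [Matrix.det_mul, Matrix.det_mul, hscalar, Matrix.det_smul, Matrix.det_one, mul_one]
    at this

lemma scalar_eq_smul_one (k : Type) [Fintype k] [DecidableEq k] :
    (Matrix.scalar k (X : ℝ[X])) = (X : ℝ[X]) • (1 : Matrix k k ℝ[X]) := by
  rw [Matrix.scalar_apply]
  ext i j
  by_cases hij : i = j <;> simp [hij, Matrix.diagonal, Matrix.one_apply]

lemma det_scalar_X (k : Type) [Fintype k] [DecidableEq k] :
    (Matrix.scalar k (X : ℝ[X])).det = X ^ (Fintype.card k) := by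
  rw [scalar_eq_smul_one, Matrix.det_smul, Matrix.det_one, mul_one]

lemma charpoly_mul_comm_pow (A : Matrix m n ℝ) (B : Matrix n m ℝ) :
    X ^ (Fintype.card n) * (A * B).charpoly = X ^ (Fintype.card m) * (B * A).charpoly := by
  set A' := A.map (C : ℝ →+* ℝ[X]) with hA'
  set B' := B.map (C : ℝ →+* ℝ[X]) with hB'
  set Sm := (Matrix.scalar m (X : ℝ[X])) with hSm
  set Sn := (Matrix.scalar n (X : ℝ[X])) with hSn
  set P : Matrix (m ⊕ n) (m ⊕ n) ℝ[X] := Matrix.fromBlocks Sm A' B' 1 with hP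
  have c11 : Sm * 1 + A' * (-B') = Matrix.charmatrix (A * B) := by
    rw [Matrix.mul_one, Matrix.mul_neg, hA', hB', ← Matrix.map_mul, Matrix.charmatrix,
      RingHom.mapMatrix_apply, hSm, sub_eq_add_neg]
  have c21 : B' * (1 : Matrix m m ℝ[X]) + (1 : Matrix n n ℝ[X]) * (-B') = 0 := by
    rw [Matrix.mul_one, Matrix.one_mul, add_neg_cancel]
  have h1 : P * Matrix.fromBlocks 1 0 (-B') 1 =
      Matrix.fromBlocks (Matrix.charmatrix (A * B)) A' 0 1 := by
    rw [hP, Matrix.fromBlocks_multiply, c11, c21, Matrix.mul_zero, Matrix.mul_one,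
      Matrix.mul_zero, Matrix.one_mul, zero_add, zero_add]
  have d21 : (-B') * Sm + Sn * B' = 0 := by
    rw [hSm, hSn, scalar_eq_smul_one, scalar_eq_smul_one, Matrix.mul_smul, Matrix.smul_mul,
      Matrix.mul_one, Matrix.one_mul, smul_neg, neg_add_cancel]
  have d22 : (-B') * A' + Sn * 1 = Matrix.charmatrix (B * A) := by
    rw [Matrix.mul_one, Matrix.neg_mul, hA', hB', ← Matrix.map_mul, Matrix.charmatrix,
      RingHom.mapMatrix_apply, hSn]
    abel
  have h2 : Matrix.fromBlocks 1 0 (-B') Sn * P =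
      Matrix.fromBlocks Sm A' 0 (Matrix.charmatrix (B * A)) := by
    rw [hP, Matrix.fromBlocks_multiply, d21, d22, Matrix.one_mul, Matrix.one_mul,
      Matrix.zero_mul, Matrix.zero_mul, add_zero, add_zero]
  have d1 : P.det = (A * B).charpoly := by
    have h' := congrArg Matrix.det h1
    rw [Matrix.det_mul, Matrix.det_fromBlocks_zero₁₂, Matrix.det_fromBlocks_zero₂₁,
      Matrix.det_one, Matrix.det_one, mul_one, mul_one, mul_one] at h'
    exact h'
  have h' := congrArg Matrix.det h2
  rw [Matrix.det_mul, Matrix.det_fromBlocks_zero₁₂, Matrix.det_fromBlocks_zero₂₁,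
    Matrix.det_one, one_mul, d1, hSn, hSm, det_scalar_X, det_scalar_X] at h'
  exact h'

lemma eval_charpoly' (M : Matrix k k ℝ) (x : ℝ) :
    M.charpoly.eval x = (x • (1 : Matrix k k ℝ) - M).det := by
  rw [Matrix.charpoly, ← Polynomial.coe_evalRingHom, RingHom.map_det]
  congr 1
  ext i j
  by_cases hij : i = j
  · subst hij
    simp [Matrix.charmatrix_apply_eq, Matrix.one_apply]
  · simp [Matrix.charmatrix_apply_ne _ _ _ hij, Matrix.one_apply, hij]

lemma smul_one_eq_algebraMap' (x : ℝ) :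
    (algebraMap ℝ (Matrix k k ℝ)) x = x • (1 : Matrix k k ℝ) := by
  rw [Matrix.algebraMap_eq_diagonal]
  ext i j
  by_cases hij : i = j <;> simp [hij, Matrix.diagonal, Matrix.one_apply]

lemma mem_spectrum_iff_root (M : Matrix k k ℝ) (x : ℝ) :
    x ∈ spectrum ℝ M ↔ M.charpoly.eval x = 0 := by
  rw [spectrum.mem_iff, smul_one_eq_algebraMap', Matrix.isUnit_iff_isUnit_det,
    isUnit_iff_ne_zero, not_ne_iff, eval_charpoly']

lemma root_of_eigvec {M : Matrix k k ℝ} {x : ℝ} {v : k → ℝ} (hv : v ≠ 0)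
    (h : M *ᵥ v = x • v) : M.charpoly.eval x = 0 := by
  rw [eval_charpoly']
  apply (Matrix.exists_mulVec_eq_zero_iff).1
  refine ⟨v, hv, ?_⟩
  rw [Matrix.sub_mulVec, Matrix.smul_mulVec, Matrix.one_mulVec, h, sub_self]

lemma dotProduct_self_pos {v : k → ℝ} (hv : v ≠ 0) : 0 < v ⬝ᵥ v := by
  have h1 : v ⬝ᵥ v = ∑ i, v i ^ 2 := by simp [dotProduct, sq]
  rw [h1]
  have hle : 0 ≤ ∑ i, v i ^ 2 := Finset.sum_nonneg fun i _ => sq_nonneg _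
  rcases hle.lt_or_eq with h | h
  · exact h
  · exfalso
    apply hv
    ext i
    have := (Finset.sum_eq_zero_iff_of_nonneg (fun i _ => sq_nonneg (v i))).1 h.symm i
      (Finset.mem_univ i)
    simpa using pow_eq_zero_iff (n := 2) (by norm_num) |>.1 this

end GeneralAlgebra

section Combinatorics

variable (G : SimpleGraph V) (o : Orientation G) (τ : TriOrientation G)

lemma head_adj_tail (e : G.edgeSet) : G.Adj (o.head e) (o.tail e) := by
  rw [← SimpleGraph.mem_edgeSet, ← o.consistent e]
  exact e.2

lemma head_ne_tail (e : G.edgeSet) : o.head e ≠ o.tail e :=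
  (head_adj_tail G o e).ne

variable {G o τ} in
lemma tri_card (t : Triangle G) : ({τ.fst t, τ.snd t, τ.trd t} : Finset V).card = 3 := by
  rw [τ.consistent t]; exact t.2.1

variable {G o τ} in
lemma tri_ne (t : Triangle G) :
    τ.fst t ≠ τ.snd t ∧ τ.snd t ≠ τ.trd t ∧ τ.fst t ≠ τ.trd t := by
  have h := tri_card (τ := τ) t
  refine ⟨?_, ?_, ?_⟩ <;> intro he
  · have hsub : ({τ.fst t, τ.snd t, τ.trd t} : Finset V) ⊆ {τ.snd t, τ.trd t} := by
      intro x hx; simp only [Finset.mem_insert, Finset.mem_singleton] at hx ⊢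
      rcases hx with rfl | rfl | rfl
      · exact Or.inl he
      · exact Or.inl rfl
      · exact Or.inr rfl
    have h1 := Finset.card_le_card hsub
    have h2 := Finset.card_insert_le (τ.snd t) ({τ.trd t} : Finset V)
    simp only [Finset.card_singleton] at h2
    omega
  · have hsub : ({τ.fst t, τ.snd t, τ.trd t} : Finset V) ⊆ {τ.fst t, τ.snd t} := by
      intro x hx; simp only [Finset.mem_insert, Finset.mem_singleton] at hx ⊢
      rcases hx with rfl | rfl | rfl
      · exact Or.inl rfl
      · exact Or.inr rfl
      · exact Or.inr he.symm
    have h1 := Finset.card_le_card hsub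
    have h2 := Finset.card_insert_le (τ.fst t) ({τ.snd t} : Finset V)
    simp only [Finset.card_singleton] at h2
    omega
  · have hsub : ({τ.fst t, τ.snd t, τ.trd t} : Finset V) ⊆ {τ.snd t, τ.trd t} := by
      intro x hx; simp only [Finset.mem_insert, Finset.mem_singleton] at hx ⊢
      rcases hx with rfl | rfl | rfl
      · exact Or.inr he
      · exact Or.inl rfl
      · exact Or.inr rfl
    have h1 := Finset.card_le_card hsub
    have h2 := Finset.card_insert_le (τ.snd t) ({τ.trd t} : Finset V)
    simp only [Finset.card_singleton] at h2
    omega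

variable {G o τ} in
lemma tri_mem (t : Triangle G) :
    τ.fst t ∈ t.val ∧ τ.snd t ∈ t.val ∧ τ.trd t ∈ t.val := by
  rw [← τ.consistent t]
  refine ⟨?_, ?_, ?_⟩ <;> simp

variable {G o τ} in
lemma tri_adj (t : Triangle G) :
    G.Adj (τ.fst t) (τ.snd t) ∧ G.Adj (τ.snd t) (τ.trd t) ∧ G.Adj (τ.trd t) (τ.fst t) := by
  obtain ⟨h1, h2, h3⟩ := tri_mem (τ := τ) t
  obtain ⟨n1, n2, n3⟩ := tri_ne (τ := τ) t
  exact ⟨t.2.2 h1 h2 n1, t.2.2 h2 h3 n2, t.2.2 h3 h1 (Ne.symm n3)⟩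

variable {G o τ} in
lemma not_agrees_of_disagrees {e : G.edgeSet} {t : Triangle G}
    (hD : Disagrees o τ e t) : ¬ Agrees o τ e t := by
  obtain ⟨n1, n2, n3⟩ := tri_ne (τ := τ) t
  have hht := head_ne_tail G o e
  rintro (⟨h1, h2⟩ | ⟨h1, h2⟩ | ⟨h1, h2⟩) <;>
    rcases hD with ⟨h3, h4⟩ | ⟨h3, h4⟩ | ⟨h3, h4⟩ <;> simp_all

variable {G o τ} in
/-- For an edge `e = s(x,y)` where `(x,y)` is a consecutive pair in the cyclic order of the
triangle `t`, the entry `C(t,e)` is `1` (if the orientation of `e` is `x → y`) or `-1`. -/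
lemma edge_terms {t : Triangle G} {e : G.edgeSet} {x y : V}
    (hxy : (e : Sym2 V) = s(x, y))
    (hcyc : (x = τ.fst t ∧ y = τ.snd t) ∨ (x = τ.snd t ∧ y = τ.trd t) ∨
      (x = τ.trd t ∧ y = τ.fst t)) :
    (cMat G o τ t e = 1 ∧ o.head e = y ∧ o.tail e = x) ∨
    (cMat G o τ t e = -1 ∧ o.head e = x ∧ o.tail e = y) := by
  have hc : s(o.head e, o.tail e) = s(x, y) := (o.consistent e).symm.trans hxy
  rw [Sym2.eq_iff] at hc
  rcases hc with ⟨hh, ht⟩ | ⟨hh, ht⟩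
  · -- head = x, tail = y : disagrees
    right
    have hD : Disagrees o τ e t := by
      rcases hcyc with ⟨hx, hy⟩ | ⟨hx, hy⟩ | ⟨hx, hy⟩
      · exact Or.inl ⟨hh.trans hx, ht.trans hy⟩
      · exact Or.inr (Or.inl ⟨hh.trans hx, ht.trans hy⟩)
      · exact Or.inr (Or.inr ⟨hh.trans hx, ht.trans hy⟩)
    refine ⟨?_, hh, ht⟩
    rw [cMat, if_neg (not_agrees_of_disagrees hD), if_pos hD]
  · -- head = y, tail = x : agrees
    left
    have hA : Agrees o τ e t := by
      rcases hcyc with ⟨hx, hy⟩ | ⟨hx, hy⟩ | ⟨hx, hy⟩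
      · exact Or.inl ⟨ht.trans hx, hh.trans hy⟩
      · exact Or.inr (Or.inl ⟨ht.trans hx, hh.trans hy⟩)
      · exact Or.inr (Or.inr ⟨ht.trans hx, hh.trans hy⟩)
    exact ⟨by rw [cMat, if_pos hA], hh, ht⟩

variable {G o τ} in
lemma cB_term {t : Triangle G} {e : G.edgeSet} {x y : V}
    (hxy : (e : Sym2 V) = s(x, y))
    (hcyc : (x = τ.fst t ∧ y = τ.snd t) ∨ (x = τ.snd t ∧ y = τ.trd t) ∨
      (x = τ.trd t ∧ y = τ.fst t)) (v : V) :
    cMat G o τ t e * bMat G o e v =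
      (if v = y then (1 : ℝ) else 0) - (if v = x then (1 : ℝ) else 0) := by
  obtain ⟨n1, n2, n3⟩ := tri_ne (τ := τ) t
  have hxyne : x ≠ y := by
    rcases hcyc with ⟨hx, hy⟩ | ⟨hx, hy⟩ | ⟨hx, hy⟩ <;> subst hx <;> subst hy
    · exact n1
    · exact n2
    · exact Ne.symm n3
  rcases edge_terms hxy hcyc with ⟨hc, hh, ht⟩ | ⟨hc, hh, ht⟩ <;>
    rw [hc, bMat_def, hh, ht] <;> split_ifs <;> simp_all

variable {G o τ} in
lemma cMat_sq {t : Triangle G} {e : G.edgeSet} {x y : V}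
    (hxy : (e : Sym2 V) = s(x, y))
    (hcyc : (x = τ.fst t ∧ y = τ.snd t) ∨ (x = τ.snd t ∧ y = τ.trd t) ∨
      (x = τ.trd t ∧ y = τ.fst t)) :
    cMat G o τ t e * cMat G o τ t e = 1 := by
  rcases edge_terms hxy hcyc with ⟨hc, -, -⟩ | ⟨hc, -, -⟩ <;> rw [hc] <;> norm_num

variable {G o τ} in
lemma edge_of_cMat_ne_zero {t : Triangle G} {e : G.edgeSet}
    (h : cMat G o τ t e ≠ 0) :
    (e : Sym2 V) = s(τ.fst t, τ.snd t) ∨ (e : Sym2 V) = s(τ.snd t, τ.trd t) ∨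
      (e : Sym2 V) = s(τ.trd t, τ.fst t) := by
  have hAD : Agrees o τ e t ∨ Disagrees o τ e t := by
    by_contra hcon
    push_neg at hcon
    rw [cMat, if_neg hcon.1, if_neg hcon.2] at h
    exact h rfl
  have hc := o.consistent e
  rcases hAD with (⟨h1, h2⟩ | ⟨h1, h2⟩ | ⟨h1, h2⟩) | (⟨h1, h2⟩ | ⟨h1, h2⟩ | ⟨h1, h2⟩) <;>
    rw [hc, h1, h2]
  · exact Or.inl (Sym2.eq_swap)
  · exact Or.inr (Or.inl (Sym2.eq_swap))
  · exact Or.inr (Or.inr (Sym2.eq_swap))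
  · exact Or.inl rfl
  · exact Or.inr (Or.inl rfl)
  · exact Or.inr (Or.inr rfl)

variable {G o τ} in
lemma edgeInTri_of_cMat_ne_zero {t : Triangle G} {e : G.edgeSet}
    (h : cMat G o τ t e ≠ 0) : EdgeInTri G (e : Sym2 V) t := by
  obtain ⟨m1, m2, m3⟩ := tri_mem (τ := τ) t
  intro v hv
  rcases edge_of_cMat_ne_zero h with he | he | he <;> rw [he] at hv <;>
    rcases Sym2.mem_iff.1 hv with rfl | rfl <;> assumption

variable {G o τ} in
lemma agrees_or_disagrees_of_edgeInTri {t : Triangle G} {e : G.edgeSet}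
    (h : EdgeInTri G (e : Sym2 V) t) : Agrees o τ e t ∨ Disagrees o τ e t := by
  obtain ⟨n1, n2, n3⟩ := tri_ne (τ := τ) t
  have hht := head_ne_tail G o e
  have hmem : ∀ v ∈ (e : Sym2 V), v ∈ ({τ.fst t, τ.snd t, τ.trd t} : Finset V) := by
    rw [τ.consistent t]; exact h
  have hh : o.head e ∈ ({τ.fst t, τ.snd t, τ.trd t} : Finset V) := by
    apply hmem; rw [o.consistent e]; exact Sym2.mem_mk_left _ _
  have ht : o.tail e ∈ ({τ.fst t, τ.snd t, τ.trd t} : Finset V) := by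
    apply hmem; rw [o.consistent e]; exact Sym2.mem_mk_right _ _
  simp only [Finset.mem_insert, Finset.mem_singleton] at hh ht
  unfold Agrees Disagrees
  rcases hh with hh | hh | hh <;> rcases ht with ht | ht | ht <;> simp_all

variable {G o τ} in
lemma cMat_ne_zero_of_edgeInTri {t : Triangle G} {e : G.edgeSet}
    (h : EdgeInTri G (e : Sym2 V) t) : cMat G o τ t e = 1 ∨ cMat G o τ t e = -1 := by
  rcases agrees_or_disagrees_of_edgeInTri h with hA | hD
  · exact Or.inl (by rw [cMat, if_pos hA])
  · exact Or.inr (by rw [cMat, if_neg (not_agrees_of_disagrees hD), if_pos hD])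

variable {G o τ} in
lemma common_edge_unique (o : Orientation G) {t₁ t₂ : Triangle G} (hne : t₁ ≠ t₂)
    {e₁ e₂ : G.edgeSet}
    (h11 : EdgeInTri G (e₁ : Sym2 V) t₁) (h12 : EdgeInTri G (e₁ : Sym2 V) t₂)
    (h21 : EdgeInTri G (e₂ : Sym2 V) t₁) (h22 : EdgeInTri G (e₂ : Sym2 V) t₂) :
    e₁ = e₂ := by
  set S : Finset V := t₁.val ∩ t₂.val with hS
  have hcard : S.card ≤ 2 := by
    by_contra hc
    push_neg at hc
    have hsub : S ⊆ t₁.val := Finset.inter_subset_left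
    have h3 : S.card ≤ 3 := le_trans (Finset.card_le_card hsub) (le_of_eq t₁.2.1)
    have hSeq : S = t₁.val := Finset.eq_of_subset_of_card_le hsub (by omega)
    have hsub2 : t₁.val ⊆ t₂.val := by rw [← hSeq]; exact Finset.inter_subset_right
    have : t₁.val = t₂.val :=
      Finset.eq_of_subset_of_card_le hsub2 (by rw [t₁.2.1, t₂.2.1])
    exact hne (Subtype.ext this)
  have hend : ∀ e : G.edgeSet, EdgeInTri G (e : Sym2 V) t₁ → EdgeInTri G (e : Sym2 V) t₂ →
      o.head e ∈ S ∧ o.tail e ∈ S := by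
    intro e he1 he2
    have hh : o.head e ∈ (e : Sym2 V) := by rw [o.consistent e]; exact Sym2.mem_mk_left _ _
    have ht : o.tail e ∈ (e : Sym2 V) := by rw [o.consistent e]; exact Sym2.mem_mk_right _ _
    exact ⟨Finset.mem_inter.2 ⟨he1 _ hh, he2 _ hh⟩, Finset.mem_inter.2 ⟨he1 _ ht, he2 _ ht⟩⟩
  obtain ⟨hh1, ht1⟩ := hend e₁ h11 h12
  obtain ⟨hh2, ht2⟩ := hend e₂ h21 h22
  have hSeq : S = {o.head e₁, o.tail e₁} := by
    apply (Finset.eq_of_subset_of_card_le ?_ ?_).symm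
    · intro v hv
      simp only [Finset.mem_insert, Finset.mem_singleton] at hv
      rcases hv with rfl | rfl <;> assumption
    · rw [Finset.card_pair (head_ne_tail G o e₁)]
      exact hcard
  rw [hSeq] at hh2 ht2
  simp only [Finset.mem_insert, Finset.mem_singleton] at hh2 ht2
  apply Subtype.ext
  rw [o.consistent e₁, o.consistent e₂]
  have hne2 := head_ne_tail G o e₂
  rcases hh2 with h | h <;> rcases ht2 with h' | h'
  · exact absurd (h.trans h'.symm) hne2
  · rw [h, h']
  · rw [h, h']
    exact Sym2.eq_swap
  · exact absurd (h.trans h'.symm) hne2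

end Combinatorics


section MatrixIdentities

variable (G : SimpleGraph V) (o : Orientation G) (τ : TriOrientation G)

lemma cMat_mul_bMat : cMat G o τ * bMat G o = 0 := by
  ext t v
  rw [Matrix.mul_apply, Matrix.zero_apply]
  obtain ⟨ha1, ha2, ha3⟩ := tri_adj (τ := τ) t
  obtain ⟨n1, n2, n3⟩ := tri_ne (τ := τ) t
  set a := τ.fst t with hav
  set b := τ.snd t with hbv
  set c := τ.trd t with hcv
  set eab : G.edgeSet := ⟨s(a, b), G.mem_edgeSet.mpr ha1⟩ with heab
  set ebc : G.edgeSet := ⟨s(b, c), G.mem_edgeSet.mpr ha2⟩ with hebc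
  set eca : G.edgeSet := ⟨s(c, a), G.mem_edgeSet.mpr ha3⟩ with heca
  have hne1 : eab ≠ ebc := by
    intro h
    have := congrArg (Subtype.val) h
    simp only [heab, hebc, Sym2.eq_iff] at this
    tauto
  have hne2 : eab ≠ eca := by
    intro h
    have := congrArg (Subtype.val) h
    simp only [heab, heca, Sym2.eq_iff] at this
    tauto
  have hne3 : ebc ≠ eca := by
    intro h
    have := congrArg (Subtype.val) h
    simp only [hebc, heca, Sym2.eq_iff] at this
    tauto
  have hout : ∀ e : G.edgeSet, e ∉ ({eab, ebc, eca} : Finset G.edgeSet) →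
      cMat G o τ t e * bMat G o e v = 0 := by
    intro e he
    by_cases hc : cMat G o τ t e = 0
    · rw [hc, zero_mul]
    · exfalso
      apply he
      simp only [Finset.mem_insert, Finset.mem_singleton]
      rcases edge_of_cMat_ne_zero hc with h | h | h
      · exact Or.inl (Subtype.ext h)
      · exact Or.inr (Or.inl (Subtype.ext h))
      · exact Or.inr (Or.inr (Subtype.ext h))
  rw [← Finset.sum_subset (Finset.subset_univ ({eab, ebc, eca} : Finset G.edgeSet))
    (fun e _ he => hout e he)]
  rw [Finset.sum_insert (by simp [hne1, hne2]), Finset.sum_insert (by simp [hne3]),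
    Finset.sum_singleton]
  rw [cB_term (x := a) (y := b) rfl (Or.inl ⟨rfl, rfl⟩) v,
    cB_term (x := b) (y := c) rfl (Or.inr (Or.inl ⟨rfl, rfl⟩)) v,
    cB_term (x := c) (y := a) rfl (Or.inr (Or.inr ⟨rfl, rfl⟩)) v]
  ring

lemma cMat_mul_cMat_transpose :
    cMat G o τ * (cMat G o τ)ᵀ =
      (3 : ℝ) • (1 : Matrix (Triangle G) (Triangle G) ℝ) + triAdj G o τ := by
  ext t₁ t₂
  rw [Matrix.mul_apply]
  simp only [Matrix.transpose_apply]
  by_cases hteq : t₁ = t₂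
  · subst hteq
    have hRHS : ((3 : ℝ) • (1 : Matrix (Triangle G) (Triangle G) ℝ) + triAdj G o τ) t₁ t₁
        = 3 := by
      have : triAdj G o τ t₁ t₁ = 0 := by
        rw [triAdj]
        simp
      simp [this, Matrix.one_apply]
    rw [hRHS]
    obtain ⟨ha1, ha2, ha3⟩ := tri_adj (τ := τ) t₁
    obtain ⟨n1, n2, n3⟩ := tri_ne (τ := τ) t₁
    set a := τ.fst t₁ with hav
    set b := τ.snd t₁ with hbv
    set c := τ.trd t₁ with hcv
    set eab : G.edgeSet := ⟨s(a, b), G.mem_edgeSet.mpr ha1⟩ with heab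
    set ebc : G.edgeSet := ⟨s(b, c), G.mem_edgeSet.mpr ha2⟩ with hebc
    set eca : G.edgeSet := ⟨s(c, a), G.mem_edgeSet.mpr ha3⟩ with heca
    have hne1 : eab ≠ ebc := by
      intro h
      have := congrArg (Subtype.val) h
      simp only [heab, hebc, Sym2.eq_iff] at this
      tauto
    have hne2 : eab ≠ eca := by
      intro h
      have := congrArg (Subtype.val) h
      simp only [heab, heca, Sym2.eq_iff] at this
      tauto
    have hne3 : ebc ≠ eca := by
      intro h
      have := congrArg (Subtype.val) h
      simp only [hebc, heca, Sym2.eq_iff] at this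
      tauto
    have hout : ∀ e : G.edgeSet, e ∉ ({eab, ebc, eca} : Finset G.edgeSet) →
        cMat G o τ t₁ e * cMat G o τ t₁ e = 0 := by
      intro e he
      by_cases hc : cMat G o τ t₁ e = 0
      · rw [hc, zero_mul]
      · exfalso
        apply he
        simp only [Finset.mem_insert, Finset.mem_singleton]
        rcases edge_of_cMat_ne_zero hc with h | h | h
        · exact Or.inl (Subtype.ext h)
        · exact Or.inr (Or.inl (Subtype.ext h))
        · exact Or.inr (Or.inr (Subtype.ext h))
    rw [← Finset.sum_subset (Finset.subset_univ ({eab, ebc, eca} : Finset G.edgeSet))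
      (fun e _ he => hout e he)]
    rw [Finset.sum_insert (by simp [hne1, hne2]), Finset.sum_insert (by simp [hne3]),
      Finset.sum_singleton]
    rw [cMat_sq (x := a) (y := b) rfl (Or.inl ⟨rfl, rfl⟩),
      cMat_sq (x := b) (y := c) rfl (Or.inr (Or.inl ⟨rfl, rfl⟩)),
      cMat_sq (x := c) (y := a) rfl (Or.inr (Or.inr ⟨rfl, rfl⟩))]
    norm_num
  · have hRHS : ((3 : ℝ) • (1 : Matrix (Triangle G) (Triangle G) ℝ) + triAdj G o τ) t₁ t₂
        = triAdj G o τ t₁ t₂ := by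
      simp [Matrix.one_apply_ne hteq]
    rw [hRHS]
    by_cases hcom : ∃ e : G.edgeSet, EdgeInTri G (e : Sym2 V) t₁ ∧ EdgeInTri G (e : Sym2 V) t₂
    · obtain ⟨e₀, he₀1, he₀2⟩ := hcom
      have hsum : ∑ e : G.edgeSet, cMat G o τ t₁ e * cMat G o τ t₂ e =
          cMat G o τ t₁ e₀ * cMat G o τ t₂ e₀ := by
        apply Finset.sum_eq_single_of_mem e₀ (Finset.mem_univ e₀)
        intro e _ hee
        by_cases h1 : cMat G o τ t₁ e = 0
        · rw [h1, zero_mul]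
        by_cases h2 : cMat G o τ t₂ e = 0
        · rw [h2, mul_zero]
        exact absurd (common_edge_unique o hteq (edgeInTri_of_cMat_ne_zero h1)
          (edgeInTri_of_cMat_ne_zero h2) he₀1 he₀2) hee
      rw [hsum]
      by_cases hagr : ∃ e : G.edgeSet, EdgeInTri G (e : Sym2 V) t₁ ∧ EdgeInTri G (e : Sym2 V) t₂ ∧
          ((Agrees o τ e t₁ ∧ Agrees o τ e t₂) ∨ (Disagrees o τ e t₁ ∧ Disagrees o τ e t₂))
      · have hRHS2 : triAdj G o τ t₁ t₂ = 1 := by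
          rw [triAdj, if_pos ⟨hteq, hagr⟩]
        rw [hRHS2]
        obtain ⟨e₁, he₁1, he₁2, hor⟩ := hagr
        have heq : e₁ = e₀ := common_edge_unique o hteq he₁1 he₁2 he₀1 he₀2
        subst heq
        rcases hor with ⟨hA1, hA2⟩ | ⟨hD1, hD2⟩
        · rw [cMat, if_pos hA1, cMat, if_pos hA2]
          norm_num
        · rw [cMat, if_neg (not_agrees_of_disagrees hD1), if_pos hD1,
            cMat, if_neg (not_agrees_of_disagrees hD2), if_pos hD2]
          norm_num
      · have hn1 : ¬ (t₁ ≠ t₂ ∧ ∃ e : G.edgeSet, EdgeInTri G (e : Sym2 V) t₁ ∧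
            EdgeInTri G (e : Sym2 V) t₂ ∧ ((Agrees o τ e t₁ ∧ Agrees o τ e t₂) ∨
            (Disagrees o τ e t₁ ∧ Disagrees o τ e t₂))) := by
          rintro ⟨-, e, h1, h2, h3⟩
          exact hagr ⟨e, h1, h2, h3⟩
        have hRHS2 : triAdj G o τ t₁ t₂ = -1 := by
          rw [triAdj, if_neg hn1, if_pos ⟨hteq, ⟨e₀, he₀1, he₀2⟩⟩]
        rw [hRHS2]
        rcases agrees_or_disagrees_of_edgeInTri (o := o) (τ := τ) he₀1 with hA1 | hD1 <;>
          rcases agrees_or_disagrees_of_edgeInTri (o := o) (τ := τ) he₀2 with hA2 | hD2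
        · exact absurd ⟨e₀, he₀1, he₀2, Or.inl ⟨hA1, hA2⟩⟩ hagr
        · have hnA2 : ¬ Agrees o τ e₀ t₂ := not_agrees_of_disagrees hD2
          rw [cMat, if_pos hA1, cMat, if_neg hnA2, if_pos hD2]
          norm_num
        · have hnA1 : ¬ Agrees o τ e₀ t₁ := not_agrees_of_disagrees hD1
          rw [cMat, if_neg hnA1, if_pos hD1, cMat, if_pos hA2]
          norm_num
        · exact absurd ⟨e₀, he₀1, he₀2, Or.inr ⟨hD1, hD2⟩⟩ hagr
    · have hsum : ∑ e : G.edgeSet, cMat G o τ t₁ e * cMat G o τ t₂ e = 0 := by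
        apply Finset.sum_eq_zero
        intro e _
        by_cases h1 : cMat G o τ t₁ e = 0
        · rw [h1, zero_mul]
        by_cases h2 : cMat G o τ t₂ e = 0
        · rw [h2, mul_zero]
        exact absurd ⟨e, edgeInTri_of_cMat_ne_zero h1, edgeInTri_of_cMat_ne_zero h2⟩ hcom
      have hn1 : ¬ (t₁ ≠ t₂ ∧ ∃ e : G.edgeSet, EdgeInTri G (e : Sym2 V) t₁ ∧
          EdgeInTri G (e : Sym2 V) t₂ ∧ ((Agrees o τ e t₁ ∧ Agrees o τ e t₂) ∨
          (Disagrees o τ e t₁ ∧ Disagrees o τ e t₂))) := by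
        rintro ⟨-, e, h1, h2, -⟩
        exact hcom ⟨e, h1, h2⟩
      have hn2 : ¬ (t₁ ≠ t₂ ∧ ∃ e : G.edgeSet, EdgeInTri G (e : Sym2 V) t₁ ∧
          EdgeInTri G (e : Sym2 V) t₂) := by
        rintro ⟨-, e, h1, h2⟩
        exact hcom ⟨e, h1, h2⟩
      rw [hsum, triAdj, if_neg hn1, if_neg hn2]

lemma bMat_mulVec_ones : bMat G o *ᵥ (fun _ => (1 : ℝ)) = 0 := by
  ext e
  have hht := head_ne_tail G o e
  rw [Matrix.mulVec, Pi.zero_apply]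
  have : ∀ v : V, bMat G o e v * 1 =
      (if v = o.head e then (1 : ℝ) else 0) + (if v = o.tail e then (-1 : ℝ) else 0) := by
    intro v
    rw [mul_one, bMat_def]
    split_ifs with h1 h2 <;> simp_all
  rw [dotProduct]
  rw [Finset.sum_congr rfl fun v _ => this v, Finset.sum_add_distrib]
  simp

end MatrixIdentities

/-- The multiset of non-zero eigenvalues of `H(G)` is the union of the
multiset of non-zero eigenvalues of the Laplacian `L(G) = Bᵀ B` and the multiset of
non-zero values among the eigenvalues of `3I + A(G_△)` (i.e. the values `3 + ηⱼ`).
In particular every non-zero Laplacian eigenvalue of `G` is an `H`-eigenvalue of `G`, and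
the largest `H`-eigenvalue is `max {μ₁, 3 + η₁}`. -/
theorem statement6 (G : SimpleGraph V) (o : Orientation G) (τ : TriOrientation G)
    [Nonempty G.edgeSet] :
    ((helm G o τ).charpoly.roots.filter fun x => x ≠ 0) =
      (((bMat G o)ᵀ * bMat G o).charpoly.roots.filter fun x => x ≠ 0) +
      ((((3 : ℝ) • (1 : Matrix (Triangle G) (Triangle G) ℝ) +
          triAdj G o τ).charpoly.roots.filter) fun x => x ≠ 0) ∧
    (∀ μ : ℝ, μ ∈ ((bMat G o)ᵀ * bMat G o).charpoly.roots → μ ≠ 0 →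
      μ ∈ (helm G o τ).charpoly.roots) ∧
    sSup (spectrum ℝ (helm G o τ)) =
      max (sSup (spectrum ℝ ((bMat G o)ᵀ * bMat G o)))
        (sSup (spectrum ℝ
          ((3 : ℝ) • (1 : Matrix (Triangle G) (Triangle G) ℝ) + triAdj G o τ))) := by
  classical
  have mono : ∀ {k : Type} [Fintype k] [DecidableEq k] (M : Matrix k k ℝ),
      M.charpoly ≠ 0 := fun M => (Matrix.charpoly_monic M).ne_zero
  have h0 : cMat G o τ * bMat G o = 0 := cMat_mul_bMat G o τ
  have hCC : cMat G o τ * (cMat G o τ)ᵀ =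
      (3 : ℝ) • (1 : Matrix (Triangle G) (Triangle G) ℝ) + triAdj G o τ :=
    cMat_mul_cMat_transpose G o τ
  have hMN : ((cMat G o τ)ᵀ * cMat G o τ) * (bMat G o * (bMat G o)ᵀ) = 0 := by
    rw [← Matrix.mul_assoc, Matrix.mul_assoc (cMat G o τ)ᵀ (cMat G o τ) (bMat G o), h0,
      Matrix.mul_zero, Matrix.zero_mul]
  have hadd : (cMat G o τ)ᵀ * cMat G o τ + bMat G o * (bMat G o)ᵀ = helm G o τ := by
    rw [helm]
    exact add_comm _ _
  have key1 : ((cMat G o τ)ᵀ * cMat G o τ).charpoly * (bMat G o * (bMat G o)ᵀ).charpoly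
      = Polynomial.X ^ (Fintype.card G.edgeSet) * (helm G o τ).charpoly := by
    rw [← hadd]
    exact charpoly_mul_eq_of_mul_eq_zero hMN
  have key2 := charpoly_mul_comm_pow (bMat G o) (bMat G o)ᵀ
  have key3 := charpoly_mul_comm_pow (cMat G o τ)ᵀ (cMat G o τ)
  rw [hCC] at key3
  have qBB : ((bMat G o * (bMat G o)ᵀ).charpoly.roots.filter fun x => x ≠ 0) =
      ((bMat G o)ᵀ * bMat G o).charpoly.roots.filter fun x => x ≠ 0 :=
    filter_roots_eq_of_pow_mul_eq (mono _) (mono _) key2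
  have qCC : (((cMat G o τ)ᵀ * cMat G o τ).charpoly.roots.filter fun x => x ≠ 0) =
      ((3 : ℝ) • (1 : Matrix (Triangle G) (Triangle G) ℝ) +
        triAdj G o τ).charpoly.roots.filter fun x => x ≠ 0 :=
    filter_roots_eq_of_pow_mul_eq (mono _) (mono _) key3
  have key1' : Polynomial.X ^ 0 *
      (((cMat G o τ)ᵀ * cMat G o τ).charpoly * (bMat G o * (bMat G o)ᵀ).charpoly)
      = Polynomial.X ^ (Fintype.card G.edgeSet) * (helm G o τ).charpoly := by
    rw [pow_zero, one_mul]
    exact key1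
  have qH := filter_roots_eq_of_pow_mul_eq (mul_ne_zero (mono _) (mono _)) (mono _) key1'
  rw [Polynomial.roots_mul (mul_ne_zero (mono _) (mono _)), Multiset.filter_add] at qH
  rw [qBB, qCC] at qH
  have part1 : ((helm G o τ).charpoly.roots.filter fun x => x ≠ 0) =
      (((bMat G o)ᵀ * bMat G o).charpoly.roots.filter fun x => x ≠ 0) +
      ((((3 : ℝ) • (1 : Matrix (Triangle G) (Triangle G) ℝ) +
          triAdj G o τ).charpoly.roots.filter) fun x => x ≠ 0) := by
    rw [← qH, add_comm]
    congr 1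
    exact @Multiset.filter_congr ℝ (fun x => x ≠ 0) (fun x => x ≠ 0) _
      (fun x => Classical.propDecidable _) _ (fun x _ => Iff.rfl)
  have part1' : ∀ y : ℝ, (y ∈ (helm G o τ).charpoly.roots ∧ y ≠ 0) ↔
      ((y ∈ ((bMat G o)ᵀ * bMat G o).charpoly.roots ∧ y ≠ 0) ∨
       (y ∈ ((3 : ℝ) • (1 : Matrix (Triangle G) (Triangle G) ℝ) +
          triAdj G o τ).charpoly.roots ∧ y ≠ 0)) := by
    intro y
    have h2 : y ∈ ((helm G o τ).charpoly.roots.filter fun x => x ≠ 0) ↔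
        y ∈ ((((bMat G o)ᵀ * bMat G o).charpoly.roots.filter fun x => x ≠ 0) +
        ((((3 : ℝ) • (1 : Matrix (Triangle G) (Triangle G) ℝ) +
          triAdj G o τ).charpoly.roots.filter) fun x => x ≠ 0)) := by
      rw [part1]
    simpa [Multiset.mem_filter, Multiset.mem_add] using h2
  refine ⟨part1, ?_, ?_⟩
  · intro μ hμ hne
    exact ((part1' μ).2 (Or.inl ⟨hμ, hne⟩)).1
  · have hfin : ∀ {k : Type} [Fintype k] [DecidableEq k] (M : Matrix k k ℝ),
        (spectrum ℝ M).Finite := by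
      intro k _ _ M
      apply (Polynomial.finite_setOf_isRoot (mono M)).subset
      intro x hx
      exact (mem_spectrum_iff_root M x).1 hx
    have hmemroots : ∀ {k : Type} [Fintype k] [DecidableEq k] (M : Matrix k k ℝ) (x : ℝ),
        x ∈ spectrum ℝ M ↔ x ∈ M.charpoly.roots := by
      intro k _ _ M x
      rw [mem_spectrum_iff_root, Polynomial.mem_roots']
      exact ⟨fun h => ⟨mono M, h⟩, fun h => h.2⟩
    apply sup_eq_max_aux _ _ _ (hfin _) (hfin _) (hfin _)
    · intro x hx hx0
      rcases (part1' x).1 ⟨(hmemroots _ x).1 hx, hx0⟩ with h | h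
      · exact Or.inl ((hmemroots _ x).2 h.1)
      · exact Or.inr ((hmemroots _ x).2 h.1)
    · intro x hx hx0
      exact (hmemroots _ x).2 ((part1' x).2 (Or.inl ⟨(hmemroots _ x).1 hx, hx0⟩)).1
    · intro x hx hx0
      exact (hmemroots _ x).2 ((part1' x).2 (Or.inr ⟨(hmemroots _ x).1 hx, hx0⟩)).1
    · -- the Laplacian has a positive eigenvalue
      have hpsdL : ((bMat G o)ᵀ * bMat G o).PosSemidef := by
        have := Matrix.posSemidef_conjTranspose_mul_self (bMat G o)
        rwa [Matrix.conjTranspose_eq_transpose_of_trivial] at this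
      have hLne0 : (bMat G o)ᵀ * bMat G o ≠ 0 := by
        intro hzero
        obtain ⟨e0⟩ := (inferInstance : Nonempty G.edgeSet)
        have hentry := congrFun (congrFun hzero (o.head e0)) (o.head e0)
        rw [Matrix.mul_apply, Matrix.zero_apply] at hentry
        have hterm : ∀ e : G.edgeSet,
            (0 : ℝ) ≤ (bMat G o)ᵀ (o.head e0) e * bMat G o e (o.head e0) := by
          intro e
          rw [Matrix.transpose_apply]
          exact mul_self_nonneg _
        have h1e : (bMat G o)ᵀ (o.head e0) e0 * bMat G o e0 (o.head e0) = 1 := by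
          rw [Matrix.transpose_apply, bMat_def, if_pos rfl]
          norm_num
        have hle : ((bMat G o)ᵀ (o.head e0) e0 * bMat G o e0 (o.head e0)) ≤
            ∑ e : G.edgeSet, (bMat G o)ᵀ (o.head e0) e * bMat G o e (o.head e0) :=
          Finset.single_le_sum (fun e _ => hterm e) (Finset.mem_univ e0)
        rw [h1e, hentry] at hle
        linarith
      obtain ⟨v, tval, htne, hvne, hev⟩ := hpsdL.1.exists_eigenvector_of_ne_zero hLne0
      have hdot : (0 : ℝ) ≤ v ⬝ᵥ (((bMat G o)ᵀ * bMat G o) *ᵥ v) := by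
        simpa using hpsdL.dotProduct_mulVec_nonneg v
      rw [hev, dotProduct_smul, smul_eq_mul] at hdot
      have hvv := dotProduct_self_pos hvne
      have htpos : 0 < tval := by
        rcases htne.lt_or_gt with h | h
        · exact absurd hdot (not_le.2 (mul_neg_of_neg_of_pos h hvv))
        · exact h
      exact ⟨tval, (mem_spectrum_iff_root _ _).2 (root_of_eigvec hvne hev), htpos⟩


end HelmPaper
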